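/- Let 𝒳 be a compact metric space with nondegenerate Borel probability measure ℙ, and let X_N consist of N i.i.d. ℙ-samples. If f : 𝒳 → 𝒴 has continuous modulus of continuity, then for every t ≥ 0 and ε > 0, ℙ(ω(f,t) − ω_N(f,t) ≤ ε) → 1 as N → ∞, i.e., the discrete modulus of continuity converges to ω(f,t) in probability. -/

import Mathlib

open Metric MeasureTheory ProbabilityTheory Filter

noncomputable def modulus {X Y : Type*} [MetricSpace X] [MetricSpace Y]
    (f : X → Y) (t : ℝ) : ℝ :=
  sSup {r : ℝ | ∃ x x' : X, dist x x' ≤ t ∧ r = dist (f x) (f x')}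

noncomputable def dmodulus {X Y : Type*} [MetricSpace X] [MetricSpace Y]
    (S : Set X) (f : X → Y) (t : ℝ) : ℝ :=
  sSup {r : ℝ | ∃ x ∈ S, ∃ x' ∈ S, dist x x' ≤ t ∧ r = dist (f x) (f x')}

lemma modulus_nonneg {X Y : Type*} [MetricSpace X] [MetricSpace Y]
    (f : X → Y) (t : ℝ) : 0 ≤ modulus f t :=
  Real.sSup_nonneg (by rintro p ⟨x, x', -, rfl⟩; exact dist_nonneg)

lemma dmodulus_nonneg {X Y : Type*} [MetricSpace X] [MetricSpace Y]
    (S : Set X) (f : X → Y) (t : ℝ) : 0 ≤ dmodulus S f t :=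
  Real.sSup_nonneg (by rintro p ⟨x, -, x', -, -, rfl⟩; exact dist_nonneg)

lemma modulus_zero {X Y : Type*} [MetricSpace X] [MetricSpace Y]
    (f : X → Y) : modulus f 0 = 0 := by
  refine le_antisymm (Real.sSup_le ?_ le_rfl) (modulus_nonneg f 0)
  rintro p ⟨x, x', hd, rfl⟩
  have hx : x = x' := by rwa [← dist_le_zero]
  simp [hx]

lemma modulus_key {X Y : Type*} [MetricSpace X] [MetricSpace Y]
    (f : X → Y) (t r : ℝ) (hr : 0 < r) (hrt : r ≤ t)
    (hbdd : BddAbove {p : ℝ | ∃ x x' : X, dist x x' ≤ t ∧ p = dist (f x) (f x')})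
    (S : Set X) (hnet : ∀ x : X, ∃ s ∈ S, dist x s ≤ r / 2) :
    modulus f (t - r) ≤ dmodulus S f t + 2 * modulus f r := by
  have hd0 : 0 ≤ dmodulus S f t := dmodulus_nonneg S f t
  have hm0 : 0 ≤ modulus f r := modulus_nonneg f r
  have hsubr : {p : ℝ | ∃ x x' : X, dist x x' ≤ r ∧ p = dist (f x) (f x')} ⊆
      {p : ℝ | ∃ x x' : X, dist x x' ≤ t ∧ p = dist (f x) (f x')} := by
    rintro p ⟨a, b, h, rfl⟩; exact ⟨a, b, h.trans hrt, rfl⟩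
  have hsubd : {p : ℝ | ∃ x ∈ S, ∃ x' ∈ S, dist x x' ≤ t ∧ p = dist (f x) (f x')} ⊆
      {p : ℝ | ∃ x x' : X, dist x x' ≤ t ∧ p = dist (f x) (f x')} := by
    rintro p ⟨a, -, b, -, h, rfl⟩; exact ⟨a, b, h, rfl⟩
  refine Real.sSup_le ?_ (by linarith)
  rintro p ⟨x, x', hd, rfl⟩
  obtain ⟨s, hs, hxs⟩ := hnet x
  obtain ⟨s', hs', hxs'⟩ := hnet x'
  have hss' : dist s s' ≤ t := by
    have h4 := dist_triangle4 s x x' s'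
    have h5 : dist s x = dist x s := dist_comm s x
    linarith [dist_comm s x ▸ hxs]
  have h1 : dist (f x) (f s) ≤ modulus f r :=
    le_csSup (hbdd.mono hsubr) ⟨x, s, by linarith, rfl⟩
  have h2 : dist (f x') (f s') ≤ modulus f r :=
    le_csSup (hbdd.mono hsubr) ⟨x', s', by linarith, rfl⟩
  have h3 : dist (f s) (f s') ≤ dmodulus S f t :=
    le_csSup (hbdd.mono hsubd) ⟨s, hs, s', hs', hss', rfl⟩
  have h4 := dist_triangle4 (f x) (f s) (f s') (f x')
  have h5 : dist (f s') (f x') = dist (f x') (f s') := dist_comm _ _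
  linarith

/-- consistency in probability of the discrete modulus of
continuity on i.i.d. empirical data sites, for each fixed `t ≥ 0`. -/
theorem dmodulus_consistency_in_probability {X Y : Type*} [MetricSpace X]
    [CompactSpace X] [MetricSpace Y]
    [MeasurableSpace X] [BorelSpace X]
    (P : Measure X) [IsProbabilityMeasure P]
    (hnd : ∀ x : X, ∀ U : Set X, IsOpen U → x ∈ U → 0 < P U)
    {Ω : Type*} [MeasurableSpace Ω] (μ : Measure Ω) [IsProbabilityMeasure μ]
    (ξ : ℕ → Ω → X) (hmeas : ∀ i, Measurable (ξ i))
    (hindep : iIndepFun ξ μ)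
    (hid : ∀ i, Measure.map (ξ i) μ = P)
    (f : X → Y) (hcont : ContinuousOn (modulus f) (Set.Ici (0 : ℝ)))
    (t : ℝ) (ht : 0 ≤ t) (ε : ℝ) (hε : 0 < ε) :
    Tendsto (fun N =>
        (μ {ω | modulus f t -
            dmodulus ((fun i => ξ i ω) '' Set.Iio N) f t ≤ ε}).toReal)
      atTop (nhds 1) := by
  by_cases hle : modulus f t ≤ ε
  · have huniv : ∀ N : ℕ, {ω | modulus f t -
        dmodulus ((fun i => ξ i ω) '' Set.Iio N) f t ≤ ε} = Set.univ := by
      intro N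
      ext ω
      simp only [Set.mem_setOf_eq, Set.mem_univ, iff_true]
      have := dmodulus_nonneg ((fun i => ξ i ω) '' Set.Iio N) f t
      linarith
    refine Tendsto.congr (fun N => ?_) (tendsto_const_nhds (x := (1:ℝ)))
    rw [huniv N, measure_univ, ENNReal.toReal_one]
  push_neg at hle
  -- boundedness of the modulus set at `t`
  have hbdd : BddAbove {p : ℝ | ∃ x x' : X, dist x x' ≤ t ∧ p = dist (f x) (f x')} := by
    by_contra h
    rw [modulus, Real.sSup_of_not_bddAbove h] at hle
    linarith
  -- t is positive
  have ht' : 0 < t := by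
    rcases ht.lt_or_eq with h | h
    · exact h
    · rw [← h, modulus_zero] at hle; linarith
  have h3 : 0 < ε / 3 := by linarith
  -- continuity at 0 and at t
  obtain ⟨δ1, hδ1, H1⟩ := Metric.continuousWithinAt_iff.1 (hcont 0 (Set.mem_Ici.2 le_rfl)) (ε/3) h3
  obtain ⟨δ2, hδ2, H2⟩ := Metric.continuousWithinAt_iff.1 (hcont t (Set.mem_Ici.2 ht)) (ε/3) h3
  set r := min (min (δ1/2) (δ2/2)) t with hrdef
  have hr : 0 < r := lt_min (lt_min (by linarith) (by linarith)) ht'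
  have hrt : r ≤ t := min_le_right _ _
  have hrδ1 : r < δ1 := lt_of_le_of_lt ((min_le_left _ _).trans (min_le_left _ _)) (by linarith)
  have hrδ2 : r < δ2 := lt_of_le_of_lt ((min_le_left _ _).trans (min_le_right _ _)) (by linarith)
  have hmr : modulus f r ≤ ε / 3 := by
    have := H1 (Set.mem_Ici.2 hr.le) (by rw [Real.dist_eq]; rw [sub_zero, abs_of_pos hr]; exact hrδ1)
    rw [modulus_zero, Real.dist_eq, sub_zero] at this
    have habs := abs_le.1 this.le
    linarith [habs.2]
  have hmt : modulus f t - modulus f (t - r) ≤ ε / 3 := by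
    have htr : (0:ℝ) ≤ t - r := by linarith
    have := H2 (Set.mem_Ici.2 htr) (by rw [Real.dist_eq]; rw [show t - r - t = -r by ring, abs_neg, abs_of_pos hr]; exact hrδ2)
    rw [Real.dist_eq] at this
    have habs := abs_le.1 this.le
    linarith [habs.1]
  -- finite cover by balls of radius r/4
  obtain ⟨C, hC⟩ := IsCompact.elim_finite_subcover (isCompact_univ (X := X))
    (fun c : X => ball c (r/4)) (fun c => isOpen_ball)
    (fun x _ => Set.mem_iUnion.2 ⟨x, mem_ball_self (by linarith)⟩)
  set B : X → Set X := fun c => ball c (r/4) with hB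
  have hPB : ∀ c : X, P (B c)ᶜ < 1 := by
    intro c
    have hp : 0 < P (B c) := hnd c (B c) isOpen_ball (mem_ball_self (by linarith))
    rw [prob_compl_eq_one_sub measurableSet_ball]
    exact ENNReal.sub_lt_self ENNReal.one_ne_top one_ne_zero hp.ne'
  set Bad : ℕ → Set Ω := fun N => ⋃ c ∈ C, ⋂ i ∈ Finset.range N, ξ i ⁻¹' (B c)ᶜ with hBadDef
  have hBadMeas : ∀ N, MeasurableSet (Bad N) := by
    intro N
    refine C.measurableSet_biUnion (fun c _ => ?_)
    exact Finset.measurableSet_biInter _ (fun i _ => hmeas i measurableSet_ball.compl)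
  have hBad_le : ∀ N, μ (Bad N) ≤ ∑ c ∈ C, (P (B c)ᶜ) ^ N := by
    intro N
    refine (measure_biUnion_finset_le C _).trans (Finset.sum_le_sum fun c _ => ?_)
    have heq : μ (⋂ i ∈ Finset.range N, ξ i ⁻¹' (B c)ᶜ) =
        ∏ i ∈ Finset.range N, μ (ξ i ⁻¹' (B c)ᶜ) :=
      hindep.meas_biInter (fun i _ => ⟨(B c)ᶜ, measurableSet_ball.compl, rfl⟩)
    rw [heq]
    refine le_of_eq ?_
    have hval : ∀ i, μ (ξ i ⁻¹' (B c)ᶜ) = P (B c)ᶜ := by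
      intro i
      rw [← hid i, Measure.map_apply (hmeas i) measurableSet_ball.compl]
    calc ∏ i ∈ Finset.range N, μ (ξ i ⁻¹' (B c)ᶜ)
        = ∏ _i ∈ Finset.range N, P (B c)ᶜ := Finset.prod_congr rfl (fun i _ => hval i)
      _ = (P (B c)ᶜ) ^ N := by rw [Finset.prod_const, Finset.card_range]
  have hsum0 : Tendsto (fun N => ∑ c ∈ C, (P (B c)ᶜ) ^ N) atTop (nhds 0) := by
    have := tendsto_finset_sum C
      (fun c _ => ENNReal.tendsto_pow_atTop_nhds_zero_of_lt_one (hPB c))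
    simpa using this
  have hBadT : Tendsto (fun N => μ (Bad N)) atTop (nhds 0) :=
    tendsto_of_tendsto_of_tendsto_of_le_of_le tendsto_const_nhds hsum0
      (fun N => zero_le) hBad_le
  -- the good event is contained in E N
  have hGoodSub : ∀ N, (Bad N)ᶜ ⊆ {ω | modulus f t -
      dmodulus ((fun i => ξ i ω) '' Set.Iio N) f t ≤ ε} := by
    intro N ω hω
    simp only [hBadDef, Set.mem_compl_iff, Set.mem_iUnion, not_exists, Set.mem_iInter,
      not_forall] at hω
    have hnet : ∀ x : X, ∃ s ∈ (fun i => ξ i ω) '' Set.Iio N, dist x s ≤ r / 2 := by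
      intro x
      have hx := hC (Set.mem_univ x)
      simp only [Set.mem_iUnion] at hx
      obtain ⟨c, hcC, hxc⟩ := hx
      obtain ⟨i, hiN, hic⟩ := hω c hcC
      simp only [Set.mem_preimage, Set.mem_compl_iff, not_not] at hic
      refine ⟨ξ i ω, ⟨i, Finset.mem_range.1 hiN, rfl⟩, ?_⟩
      have h1 : dist x c < r / 4 := mem_ball.1 hxc
      have h2 : dist (ξ i ω) c < r / 4 := mem_ball.1 hic
      have := dist_triangle x c (ξ i ω)
      have := dist_comm (ξ i ω) c
      linarith [dist_triangle x c (ξ i ω), dist_comm c (ξ i ω) ▸ h2]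
    have hkey := modulus_key f t r hr hrt hbdd _ hnet
    have hsub : modulus f (t - r) ≤
        dmodulus ((fun i => ξ i ω) '' Set.Iio N) f t + 2 * modulus f r := hkey
    simp only [Set.mem_setOf_eq]
    linarith
  -- squeeze
  have hlow : ∀ N, 1 - (μ (Bad N)).toReal ≤ (μ {ω | modulus f t -
      dmodulus ((fun i => ξ i ω) '' Set.Iio N) f t ≤ ε}).toReal := by
    intro N
    have h1 : μ (Bad N)ᶜ ≤ μ {ω | modulus f t -
        dmodulus ((fun i => ξ i ω) '' Set.Iio N) f t ≤ ε} := measure_mono (hGoodSub N)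
    have h2 : (μ (Bad N)ᶜ).toReal = 1 - (μ (Bad N)).toReal := by
      rw [prob_compl_eq_one_sub (hBadMeas N),
        ENNReal.toReal_sub_of_le prob_le_one ENNReal.one_ne_top, ENNReal.toReal_one]
    rw [← h2]
    exact ENNReal.toReal_le_toReal (measure_ne_top μ _) (measure_ne_top μ _) |>.2 h1
  have hup : ∀ N, (μ {ω | modulus f t -
      dmodulus ((fun i => ξ i ω) '' Set.Iio N) f t ≤ ε}).toReal ≤ 1 := by
    intro N
    rw [← ENNReal.toReal_one]
    exact ENNReal.toReal_le_toReal (measure_ne_top μ _) ENNReal.one_ne_top |>.2 prob_le_one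
  have hlowT : Tendsto (fun N => 1 - (μ (Bad N)).toReal) atTop (nhds 1) := by
    have : Tendsto (fun N => (μ (Bad N)).toReal) atTop (nhds 0) := by
      simpa [Function.comp_def] using (ENNReal.tendsto_toReal (by simp)).comp hBadT
    simpa using tendsto_const_nhds.sub this
  exact tendsto_of_tendsto_of_tendsto_of_le_of_le hlowT tendsto_const_nhds hlow hup
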